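/- Let ρ₁ and ρ₂ be invertible density matrices of dimension d and define √(ρ₁ρ₂) := ρ₁^{1/2} (ρ₁^{1/2} ρ₂ ρ₁^{1/2})^{1/2} ρ₁^{−1/2}. Then the operator norm of ρ₁^{−1/2} · √(ρ₁ρ₂) · ρ₂^{−1/2} equals 1. -/

import Mathlib

open scoped Classical

open Matrix ComplexOrder

/-- The positive semidefinite square root of a matrix: the unique PSD square root
when the matrix is PSD, and `0` otherwise. -/
noncomputable def msqrt {n : Type*} [Fintype n] [DecidableEq n]
    (A : Matrix n n ℂ) : Matrix n n ℂ :=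
  if h : A.PosSemidef then
    (h.1.eigenvectorUnitary : Matrix n n ℂ) * diagonal ((↑) ∘ Real.sqrt ∘ h.1.eigenvalues) *
      (star h.1.eigenvectorUnitary : Matrix n n ℂ)
  else 0

/-- `√(ρ₁ρ₂) := ρ₁^{1/2} (ρ₁^{1/2} ρ₂ ρ₁^{1/2})^{1/2} ρ₁^{−1/2}`, the square root of the
product of two (invertible) positive semidefinite matrices. -/
noncomputable def sqrtProd {n : Type*} [Fintype n] [DecidableEq n]
    (ρ₁ ρ₂ : Matrix n n ℂ) : Matrix n n ℂ :=
  msqrt ρ₁ * msqrt (msqrt ρ₁ * ρ₂ * msqrt ρ₁) * (msqrt ρ₁)⁻¹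

noncomputable def Matrix.PosSemidef.sqrt {n : Type*} [Fintype n] [DecidableEq n]
    {A : Matrix n n ℂ} (h : A.PosSemidef) : Matrix n n ℂ :=
  (h.1.eigenvectorUnitary : Matrix n n ℂ) * diagonal ((↑) ∘ Real.sqrt ∘ h.1.eigenvalues) *
    (star h.1.eigenvectorUnitary : Matrix n n ℂ)

theorem Matrix.PosSemidef.posSemidef_sqrt {n : Type*} [Fintype n] [DecidableEq n]
    {A : Matrix n n ℂ} (h : A.PosSemidef) : h.sqrt.PosSemidef := by
  unfold Matrix.PosSemidef.sqrt
  have hD : (diagonal ((↑) ∘ Real.sqrt ∘ h.1.eigenvalues) : Matrix n n ℂ).PosSemidef := by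
    rw [posSemidef_diagonal_iff]
    intro i
    simp only [Function.comp_apply]
    exact_mod_cast Real.sqrt_nonneg _
  have := hD.mul_mul_conjTranspose_same (h.1.eigenvectorUnitary : Matrix n n ℂ)
  rwa [← star_eq_conjTranspose] at this

theorem Matrix.PosSemidef.sqrt_mul_self {n : Type*} [Fintype n] [DecidableEq n]
    {A : Matrix n n ℂ} (h : A.PosSemidef) : h.sqrt * h.sqrt = A := by
  unfold Matrix.PosSemidef.sqrt
  set U := (h.1.eigenvectorUnitary : Matrix n n ℂ)
  have hU : star U * U = 1 := Unitary.star_mul_self_of_mem h.1.eigenvectorUnitary.prop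
  have hA := h.1.spectral_theorem
  rw [Unitary.conjStarAlgAut_apply] at hA
  have hsq : (diagonal ((↑) ∘ Real.sqrt ∘ h.1.eigenvalues) : Matrix n n ℂ) *
      diagonal ((↑) ∘ Real.sqrt ∘ h.1.eigenvalues) = diagonal (RCLike.ofReal ∘ h.1.eigenvalues) := by
    rw [diagonal_mul_diagonal]
    congr 1
    funext i
    simp only [Function.comp_apply]
    rw [← Complex.ofReal_mul, Real.mul_self_sqrt (h.eigenvalues_nonneg i)]
    rfl
  calc U * diagonal ((↑) ∘ Real.sqrt ∘ h.1.eigenvalues) * star U *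
        (U * diagonal ((↑) ∘ Real.sqrt ∘ h.1.eigenvalues) * star U)
      = U * (diagonal ((↑) ∘ Real.sqrt ∘ h.1.eigenvalues) * (star U * U) *
          diagonal ((↑) ∘ Real.sqrt ∘ h.1.eigenvalues)) * star U := by noncomm_ring
    _ = A := by rw [hU, mul_one, hsq]; exact hA.symm

/-- For invertible density matrices `ρ₁`, `ρ₂`, the operator norm (largest singular
value) of `ρ₁^{−1/2} · √(ρ₁ρ₂) · ρ₂^{−1/2}` equals 1. -/
theorem opNorm_inv_sqrt_sqrtProd_inv_sqrt {d : ℕ}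
    {ρ₁ ρ₂ : Matrix (Fin d) (Fin d) ℂ}
    (h₁ : ρ₁.PosSemidef) (h₁t : ρ₁.trace = 1) (h₁inv : IsUnit ρ₁.det)
    (h₂ : ρ₂.PosSemidef) (h₂t : ρ₂.trace = 1) (h₂inv : IsUnit ρ₂.det) :
    ‖Matrix.toEuclideanCLM (𝕜 := ℂ)
        ((msqrt ρ₁)⁻¹ * sqrtProd ρ₁ ρ₂ * (msqrt ρ₂)⁻¹)‖ = 1 := by
  -- d > 0
  have hd : 0 < d := by
    by_contra h
    push_neg at h
    interval_cases d
    simp [Matrix.trace] at h₁t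
  haveI : NeZero d := ⟨hd.ne'⟩
  -- abbreviations
  set s₁ := h₁.sqrt with hs₁
  set s₂ := h₂.sqrt with hs₂
  have hm₁ : msqrt ρ₁ = s₁ := by rw [msqrt, dif_pos h₁]; rfl
  have hm₂ : msqrt ρ₂ = s₂ := by rw [msqrt, dif_pos h₂]; rfl
  have hs₁s : s₁ * s₁ = ρ₁ := h₁.sqrt_mul_self
  have hs₂s : s₂ * s₂ = ρ₂ := h₂.sqrt_mul_self
  have hs₁d : IsUnit s₁.det := by
    have : s₁.det * s₁.det = ρ₁.det := by rw [← det_mul, hs₁s]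
    exact isUnit_of_mul_isUnit_left (this ▸ h₁inv)
  have hs₂d : IsUnit s₂.det := by
    have : s₂.det * s₂.det = ρ₂.det := by rw [← det_mul, hs₂s]
    exact isUnit_of_mul_isUnit_left (this ▸ h₂inv)
  -- the middle matrix
  have hM : (s₁ * ρ₂ * s₁).PosSemidef := by
    have := h₂.mul_mul_conjTranspose_same s₁
    rwa [h₁.posSemidef_sqrt.isHermitian.eq] at this
  set M := s₁ * ρ₂ * s₁ with hMdef
  set sM := hM.sqrt with hsM
  have hmM : msqrt M = sM := by rw [msqrt, dif_pos hM]; rfl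
  have hsMs : sM * sM = M := hM.sqrt_mul_self
  have hMd : IsUnit M.det := by
    rw [hMdef]
    simp only [det_mul]
    exact (hs₁d.mul h₂inv).mul hs₁d
  have hsMd : IsUnit sM.det := by
    have : sM.det * sM.det = M.det := by rw [← det_mul, hsMs]
    exact isUnit_of_mul_isUnit_left (this ▸ hMd)
  -- simplify A
  have hA : (msqrt ρ₁)⁻¹ * sqrtProd ρ₁ ρ₂ * (msqrt ρ₂)⁻¹
      = sM * s₁⁻¹ * s₂⁻¹ := by
    rw [sqrtProd, hm₁, hm₂, hmM]
    rw [show s₁⁻¹ * (s₁ * sM * s₁⁻¹) = sM * s₁⁻¹ by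
      rw [← mul_assoc, ← mul_assoc, nonsing_inv_mul _ hs₁d, one_mul]]
  set A := sM * s₁⁻¹ * s₂⁻¹ with hAdef
  -- A is unitary as a matrix
  have hstarA : Aᴴ = s₂⁻¹ * s₁⁻¹ * sM := by
    rw [hAdef, conjTranspose_mul, conjTranspose_mul,
      h₂.posSemidef_sqrt.isHermitian.inv.eq,
      h₁.posSemidef_sqrt.isHermitian.inv.eq,
      hM.posSemidef_sqrt.isHermitian.eq, mul_assoc]
  have hAAs : A * Aᴴ = 1 := by
    rw [hstarA, hAdef]
    have h1 : s₂⁻¹ * s₂⁻¹ = ρ₂⁻¹ := by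
      rw [← Matrix.mul_inv_rev, hs₂s]
    have h2 : s₁⁻¹ * ρ₂⁻¹ * s₁⁻¹ = M⁻¹ := by
      rw [hMdef, Matrix.mul_inv_rev, Matrix.mul_inv_rev, mul_assoc]
    calc sM * s₁⁻¹ * s₂⁻¹ * (s₂⁻¹ * s₁⁻¹ * sM)
        = sM * (s₁⁻¹ * (s₂⁻¹ * s₂⁻¹) * s₁⁻¹) * sM := by noncomm_ring
      _ = sM * M⁻¹ * sM := by rw [h1, h2]
      _ = sM * (sM⁻¹ * sM⁻¹) * sM := by rw [← Matrix.mul_inv_rev, hsMs]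
      _ = (sM * sM⁻¹) * (sM⁻¹ * sM) := by noncomm_ring
      _ = 1 := by rw [mul_nonsing_inv _ hsMd, nonsing_inv_mul _ hsMd, one_mul]
  have hAsA : Aᴴ * A = 1 := mul_eq_one_comm.mp hAAs
  -- transfer to CLM
  rw [hA]
  have hmem : (toEuclideanCLM (𝕜 := ℂ) A) ∈
      unitary (EuclideanSpace ℂ (Fin d) →L[ℂ] EuclideanSpace ℂ (Fin d)) := by
    constructor
    · rw [← map_star, ← _root_.map_mul, star_eq_conjTranspose, hAsA]; exact _root_.map_one _
    · rw [← map_star, ← _root_.map_mul, star_eq_conjTranspose, hAAs]; exact _root_.map_one _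
  exact CStarRing.norm_of_mem_unitary hmem
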